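/- arXiv:0912.0238 — 3 statements merged into one kernel-verified Lean document; each statement's English description precedes it below -/
import Mathlib

section
/- (Brauer's theorem) Let A be an n×n complex matrix with eigenvalue λ₀ and corresponding right eigenvector x (so A x = λ₀ x, x ≠ 0). Then for every complex row vector v, the characteristic polynomial of A + x vᵀ equals the characteristic polynomial of A multiplied by (t - (λ₀ + v·x))/(t - λ₀); in particular λ₀ + v·x is an eigenvalue of A + x vᵀ, and every eigenvalue of A other than λ₀ (with multiplicity) remains an eigenvalue of A + x vᵀ. -/
open Matrix Polynomial

lemma eval_charpoly_aux {m : ℕ} (M : Matrix (Fin m) (Fin m) ℂ) (t : ℂ) :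
    M.charpoly.eval t = (t • (1 : Matrix (Fin m) (Fin m) ℂ) - M).det := by
  rw [Matrix.charpoly, eval_det, matPolyEquiv_charmatrix]
  congr 1
  simp [smul_eq_diagonal_mul, Matrix.scalar]

lemma root_of_eigen {m : ℕ} (M : Matrix (Fin m) (Fin m) ℂ) (μ : ℂ) (y : Fin m → ℂ)
    (hy : y ≠ 0) (h : M *ᵥ y = μ • y) : M.charpoly.eval μ = 0 := by
  rw [eval_charpoly_aux]
  rw [← Matrix.exists_mulVec_eq_zero_iff]
  refine ⟨y, hy, ?_⟩
  rw [Matrix.sub_mulVec, h, Matrix.smul_mulVec, Matrix.one_mulVec, sub_self]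

/-- Brauer's theorem: if `A x = λ₀ x` with `x ≠ 0`, then for every vector `v` the
characteristic polynomial of `A + x vᵀ` satisfies
`charpoly (A + x vᵀ) * (t - λ₀) = charpoly A * (t - (λ₀ + v ⬝ x))`;
in particular `λ₀ + v ⬝ x` is an eigenvalue of `A + x vᵀ`, and every eigenvalue of `A`
other than `λ₀` remains an eigenvalue of `A + x vᵀ`. -/
theorem stmt_1 {n : ℕ} (A : Matrix (Fin n) (Fin n) ℂ) (lam0 : ℂ)
    (x : Fin n → ℂ) (hx : x ≠ 0) (hAx : A *ᵥ x = lam0 • x) (v : Fin n → ℂ) :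
    (A + Matrix.vecMulVec x v).charpoly * (X - C lam0)
        = A.charpoly * (X - C (lam0 + v ⬝ᵥ x)) ∧
      (A + Matrix.vecMulVec x v).charpoly.IsRoot (lam0 + v ⬝ᵥ x) ∧
      (∀ μ : ℂ, μ ≠ lam0 → A.charpoly.IsRoot μ →
        (A + Matrix.vecMulVec x v).charpoly.IsRoot μ) := by
  have hlam : A.charpoly.eval lam0 = 0 := root_of_eigen A lam0 x hx hAx
  have key : (A + Matrix.vecMulVec x v).charpoly * (X - C lam0)
      = A.charpoly * (X - C (lam0 + v ⬝ᵥ x)) := by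
    apply Polynomial.eq_of_infinite_eval_eq
    have hfin : { t : ℂ | A.charpoly.eval t = 0 }.Finite :=
      Polynomial.finite_setOf_isRoot A.charpoly_monic.ne_zero
    refine Set.Infinite.mono ?_ hfin.infinite_compl
    intro t ht
    simp only [Set.mem_compl_iff, Set.mem_setOf_eq] at ht
    have htlam : t ≠ lam0 := fun h => ht (h ▸ hlam)
    set B := t • (1 : Matrix (Fin n) (Fin n) ℂ) - A with hB
    have hdetB : B.det ≠ 0 := by rw [← eval_charpoly_aux]; exact ht
    have hBx : B *ᵥ x = (t - lam0) • x := by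
      rw [hB, Matrix.sub_mulVec, hAx, Matrix.smul_mulVec, Matrix.one_mulVec, sub_smul]
    have hBinvx : B⁻¹ *ᵥ x = (t - lam0)⁻¹ • x := by
      have h1 : B⁻¹ *ᵥ (B *ᵥ x) = x := by
        rw [Matrix.mulVec_mulVec, Matrix.nonsing_inv_mul B (isUnit_iff_ne_zero.mpr hdetB),
          Matrix.one_mulVec]
      rw [hBx, Matrix.mulVec_smul] at h1
      have ht0 : t - lam0 ≠ 0 := sub_ne_zero.mpr htlam
      calc B⁻¹ *ᵥ x = (t - lam0)⁻¹ • ((t - lam0) • (B⁻¹ *ᵥ x)) := by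
            rw [smul_smul, inv_mul_cancel₀ ht0, one_smul]
        _ = (t - lam0)⁻¹ • x := by rw [h1]
    have hmain : (t • (1 : Matrix (Fin n) (Fin n) ℂ) - (A + Matrix.vecMulVec x v)).det
        = B.det * (1 - (t - lam0)⁻¹ * (v ⬝ᵥ x)) := by
      have hcr : Matrix.replicateCol Unit (-x) * Matrix.replicateRow Unit v = -Matrix.vecMulVec x v := by
        ext i j
        simp [Matrix.mul_apply, Matrix.vecMulVec_apply]
      have heq : t • (1 : Matrix (Fin n) (Fin n) ℂ) - (A + Matrix.vecMulVec x v)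
          = B + Matrix.replicateCol Unit (-x) * Matrix.replicateRow Unit v := by
        rw [hcr, hB]
        abel
      rw [heq, Matrix.det_add_replicateCol_mul_replicateRow (isUnit_iff_ne_zero.mpr hdetB)]
      congr 1
      rw [Matrix.det_unique]
      rw [Matrix.mul_assoc, ← Matrix.replicateCol_mulVec, Matrix.mulVec_neg, hBinvx]
      simp only [Matrix.add_apply, Matrix.one_apply_eq, Matrix.replicateRow_mul_replicateCol_apply,
        dotProduct_neg, dotProduct_smul, smul_eq_mul]
      ring
    simp only [Set.mem_setOf_eq, eval_mul, eval_sub, eval_X, eval_C, eval_add,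
      eval_charpoly_aux]
    rw [hmain]
    have ht0 : t - lam0 ≠ 0 := sub_ne_zero.mpr htlam
    have hfs : (1 - (t - lam0)⁻¹ * (v ⬝ᵥ x)) * (t - lam0) = t - (lam0 + v ⬝ᵥ x) := by
      field_simp
      ring
    rw [mul_assoc, hfs]
  refine ⟨key, ?_, ?_⟩
  · by_cases hvx : v ⬝ᵥ x = 0
    · have : (A + Matrix.vecMulVec x v) *ᵥ x = lam0 • x := by
        have hvv : Matrix.vecMulVec x v *ᵥ x = (v ⬝ᵥ x) • x := by
          ext i
          simp [Matrix.mulVec, Matrix.vecMulVec_apply, dotProduct, Finset.mul_sum, mul_assoc,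
            mul_comm, mul_left_comm]
        rw [Matrix.add_mulVec, hAx, hvv, hvx]
        simp
      have := root_of_eigen _ lam0 x hx this
      simpa [Polynomial.IsRoot, hvx] using this
    · have := congrArg (Polynomial.eval (lam0 + v ⬝ᵥ x)) key
      simp only [eval_mul, eval_sub, eval_X, eval_C, sub_self, mul_zero] at this
      have h2 : lam0 + v ⬝ᵥ x - lam0 ≠ 0 := by
        simpa using hvx
      exact (mul_eq_zero.mp this).resolve_right h2
  · intro μ hμ hroot
    have := congrArg (Polynomial.eval μ) key
    simp only [eval_mul, eval_sub, eval_X, eval_C, hroot.eq_zero, zero_mul] at this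
    have h2 : μ - lam0 ≠ 0 := sub_ne_zero.mpr hμ
    exact (mul_eq_zero.mp this).resolve_right h2
end

section
/- Let P be a row-stochastic matrix, v a probability distribution, and 0 ≤ α < 1. Then the matrix αP + (1−α)𝟙ᵀv is row-stochastic, and every eigenvalue of it other than 1 has modulus at most α; in particular, 1 is a strictly dominant (simple modulus-wise) eigenvalue when α < 1. -/
open Matrix

/-- The matrix `αP + (1-α) 𝟙ᵀ v` (Markov chain with restart) is row-stochastic, and
every eigenvalue of it other than 1 has modulus at most `α`; so 1 is a strictly
dominant eigenvalue when `α < 1`. -/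
theorem stmt_14 {n : ℕ} (P : Matrix (Fin n) (Fin n) ℝ)
    (hnonneg : ∀ i j, 0 ≤ P i j) (hrow : ∀ i, ∑ j, P i j = 1)
    (v : Fin n → ℝ) (hv : ∀ i, 0 ≤ v i) (hv1 : ∑ i, v i = 1)
    (α : ℝ) (hα0 : 0 ≤ α) (hα1 : α < 1) :
    let Q : Matrix (Fin n) (Fin n) ℝ :=
      α • P + (1 - α) • Matrix.vecMulVec (fun _ => (1 : ℝ)) v
    (∀ i j, 0 ≤ Q i j) ∧ (∀ i, ∑ j, Q i j = 1) ∧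
      ∀ μ : ℂ, (Q.map (algebraMap ℝ ℂ)).charpoly.IsRoot μ → μ ≠ 1 → ‖μ‖ ≤ α := by
  intro Q
  have hQ : ∀ i j, Q i j = α * P i j + (1 - α) * v j := by
    intro i j
    simp [Q, Matrix.add_apply, Matrix.smul_apply, Matrix.vecMulVec_apply, smul_eq_mul]
  have hQnonneg : ∀ i j, 0 ≤ Q i j := by
    intro i j
    rw [hQ]
    have h1 : 0 ≤ α * P i j := mul_nonneg hα0 (hnonneg i j)
    have h2 : 0 ≤ (1 - α) * v j := mul_nonneg (by linarith) (hv j)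
    linarith
  have hQrow : ∀ i, ∑ j, Q i j = 1 := by
    intro i
    simp only [hQ]
    rw [Finset.sum_add_distrib, ← Finset.mul_sum, ← Finset.mul_sum, hrow i, hv1]
    ring
  refine ⟨hQnonneg, hQrow, ?_⟩
  intro μ hroot hμ1
  set Qc : Matrix (Fin n) (Fin n) ℂ := Q.map (algebraMap ℝ ℂ) with hQc
  -- root of charpoly gives singular matrix
  have hdet : (Matrix.diagonal (fun _ => μ) - Qc).det = 0 := by
    have := hroot
    rw [Matrix.charpoly, Polynomial.IsRoot, ← Polynomial.coe_evalRingHom,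
      RingHom.map_det (Polynomial.evalRingHom μ) Qc.charmatrix] at this
    convert this using 2
    ext i j
    by_cases hij : i = j <;>
      simp [Matrix.charmatrix_apply, Matrix.diagonal, Matrix.sub_apply, hij,
        RingHom.mapMatrix_apply]
  -- left eigenvector
  have hdetT : ((Matrix.diagonal (fun _ => μ) - Qc)ᵀ).det = 0 := by
    rw [Matrix.det_transpose]; exact hdet
  obtain ⟨u, hu0, hu⟩ := (Matrix.exists_mulVec_eq_zero_iff).mpr hdetT
  have hkey : ∀ j, ∑ i, u i * Qc i j = μ * u j := by
    intro j
    have := congrFun hu j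
    rw [Matrix.mulVec_transpose] at this
    simp only [Matrix.vecMul, dotProduct, Matrix.sub_apply, Matrix.diagonal_apply,
      Pi.zero_apply, mul_sub, Finset.sum_sub_distrib] at this
    have hd : (∑ i, u i * if i = j then μ else 0) = μ * u j := by
      rw [Finset.sum_congr rfl (fun i _ => by rw [mul_ite, mul_zero] :
        ∀ i ∈ Finset.univ, (u i * if i = j then μ else 0) = if i = j then u i * μ else 0)]
      simp [mul_comm]
    rw [hd] at this
    linear_combination -this
  -- sum of u is zero
  have ht : ∑ i, u i = 0 := by
    have hsum : μ * ∑ i, u i = ∑ i, u i := by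
      calc μ * ∑ i, u i = ∑ j, μ * u j := by rw [Finset.mul_sum]
        _ = ∑ j, ∑ i, u i * Qc i j := by simp_rw [hkey]
        _ = ∑ i, ∑ j, u i * Qc i j := Finset.sum_comm
        _ = ∑ i, u i * ∑ j, Qc i j := by simp_rw [Finset.mul_sum]
        _ = ∑ i, u i := by
            refine Finset.sum_congr rfl fun i _ => ?_
            have : ∑ j, Qc i j = 1 := by
              simp only [hQc, Matrix.map_apply]
              rw [← map_sum, hQrow i, _root_.map_one]
            rw [this, mul_one]
    by_contra h
    exact hμ1 (mul_right_cancel₀ h (by rw [hsum, one_mul]))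
  -- u is a left eigenvector of α P
  have hkey2 : ∀ j, μ * u j = (α : ℂ) * ∑ i, u i * (algebraMap ℝ ℂ) (P i j) := by
    intro j
    rw [← hkey j]
    have : ∀ i, u i * Qc i j
        = (α : ℂ) * (u i * (algebraMap ℝ ℂ) (P i j)) + ((1 : ℂ) - α) * (v j : ℂ) * u i := by
      intro i
      simp only [hQc, Matrix.map_apply, hQ, Complex.coe_algebraMap]
      push_cast
      ring
    simp_rw [this]
    rw [Finset.sum_add_distrib, ← Finset.mul_sum, ← Finset.mul_sum, ht, mul_zero, add_zero]
  -- ℓ¹ estimate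
  have hS0 : 0 < ∑ i, ‖u i‖ := by
    rcases Function.ne_iff.mp hu0 with ⟨i, hi⟩
    exact Finset.sum_pos' (fun i _ => norm_nonneg _)
      ⟨i, Finset.mem_univ i, norm_pos_iff.mpr hi⟩
  have hineq : ‖μ‖ * ∑ i, ‖u i‖ ≤ α * ∑ i, ‖u i‖ := by
    calc ‖μ‖ * ∑ i, ‖u i‖ = ∑ j, ‖μ * u j‖ := by
          rw [Finset.mul_sum]; exact Finset.sum_congr rfl fun j _ => (norm_mul _ _).symm
      _ ≤ α * ∑ i, ‖u i‖ := by
          rw [Finset.mul_sum]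
          have step : ∀ j, ‖μ * u j‖ ≤ α * ∑ i, ‖u i‖ * P i j := by
            intro j
            rw [hkey2 j, norm_mul]
            have h1 : ‖(α : ℂ)‖ = α := by
              rw [Complex.norm_real, Real.norm_eq_abs, abs_of_nonneg hα0]
            rw [h1]
            refine mul_le_mul_of_nonneg_left ?_ hα0
            calc ‖∑ i, u i * (algebraMap ℝ ℂ) (P i j)‖
                ≤ ∑ i, ‖u i * (algebraMap ℝ ℂ) (P i j)‖ := norm_sum_le _ _
              _ = ∑ i, ‖u i‖ * P i j := by
                  refine Finset.sum_congr rfl fun i _ => ?_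
                  rw [norm_mul]
                  congr 1
                  simp [Real.norm_eq_abs, abs_of_nonneg (hnonneg i j)]
          calc ∑ j, ‖μ * u j‖ ≤ ∑ j, α * ∑ i, ‖u i‖ * P i j :=
                Finset.sum_le_sum fun j _ => step j
            _ = ∑ j, ∑ i, α * (‖u i‖ * P i j) := by simp_rw [Finset.mul_sum]
            _ = ∑ i, ∑ j, α * (‖u i‖ * P i j) := Finset.sum_comm
            _ = ∑ i, α * ‖u i‖ := by
                refine Finset.sum_congr rfl fun i _ => ?_
                rw [← Finset.mul_sum, ← Finset.mul_sum, hrow i, mul_one]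
  exact le_of_mul_le_mul_right (by linarith [hineq]) hS0
end

section
/- There exist a 2×2 matrix M with spectral radius less than 1 and a nonnegative row vector v such that the rankings induced by v M (I − M)⁻¹ and v (I − M)⁻¹ differ, i.e., there are coordinates i, j with (vM(I−M)⁻¹)_i < (vM(I−M)⁻¹)_j but (v(I−M)⁻¹)_i > (v(I−M)⁻¹)_j. -/
open Matrix

/-- For a general boundary condition `v`, the indices `v M (I-M)⁻¹` and `v (I-M)⁻¹`
can induce different rankings: there is a 2×2 matrix `M` with spectral radius `< 1`
and a nonnegative vector `v` with coordinates ordered oppositely by the two indices. -/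
theorem stmt_16 :
    ∃ (M : Matrix (Fin 2) (Fin 2) ℝ) (v : Fin 2 → ℝ),
      (∀ μ : ℂ, (M.map (algebraMap ℝ ℂ)).charpoly.IsRoot μ → ‖μ‖ < 1) ∧
      (∀ i, 0 ≤ v i) ∧
      ∃ i j : Fin 2,
        ((v ᵥ* M) ᵥ* (1 - M)⁻¹) i < ((v ᵥ* M) ᵥ* (1 - M)⁻¹) j ∧
        (v ᵥ* (1 - M)⁻¹) j < (v ᵥ* (1 - M)⁻¹) i := by
  refine ⟨!![0, 1/2; 0, 0], ![1, 0], ?_, ?_, 0, 1, ?_, ?_⟩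
  · intro μ hμ
    have hmap : (!![0, 1/2; 0, 0] : Matrix (Fin 2) (Fin 2) ℝ).map (algebraMap ℝ ℂ)
        = !![(0 : ℂ), 1/2; 0, 0] := by
      ext i j
      fin_cases i <;> fin_cases j <;> simp [Matrix.map_apply]
    rw [hmap] at hμ
    simp [Matrix.charpoly, Matrix.det_fin_two, Matrix.charmatrix_apply,
      Polynomial.IsRoot, Matrix.one_apply] at hμ
    have hz : μ = 0 := by tauto
    simp [hz]
  · intro i; fin_cases i <;> norm_num
  all_goals {
    have h1M : (1 : Matrix (Fin 2) (Fin 2) ℝ) - !![0, 1/2; 0, 0] = !![1, -(1/2); 0, 1] := by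
      ext i j; fin_cases i <;> fin_cases j <;> simp [Matrix.one_apply]
    have hinv : ((1 : Matrix (Fin 2) (Fin 2) ℝ) - !![0, 1/2; 0, 0])⁻¹ = !![1, 1/2; 0, 1] := by
      rw [h1M]
      apply Matrix.inv_eq_right_inv
      ext i j; fin_cases i <;> fin_cases j <;>
        simp [Matrix.mul_apply, Fin.sum_univ_two, Matrix.one_apply]
    rw [hinv]
    simp [Matrix.vecMul, dotProduct, Fin.sum_univ_two]
    try norm_num }
end
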